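/- Let r = 2^m with m > 1 and s = 2^n, and suppose r + 1 divides s - 1. Then there exists c ∈ F_{r^2} such that G(c,y) = y^{s+1} + c y^s + c^r y + 1 has no root y in μ_{r+1}. -/

import Mathlib

open Polynomial Finset

/-- Roots in a field of `X ^ k - X` style conditions are bounded by the degree. -/
lemma aux_card_pow_eq_le (K : Type) [Field K] [Fintype K] [DecidableEq K] (k : ℕ) (hk : 1 < k) :
    (Finset.univ.filter (fun c : K => c ^ k = c)).card ≤ k := by
  classical
  set p : K[X] := X ^ k - X with hp'
  have hpne : p ≠ 0 := by
    intro h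
    have hc : p.coeff k = 1 := by
      rw [hp']
      have h1 : k ≠ 1 := by omega
      simp [coeff_X, h1, Ne.symm h1]
    rw [h] at hc
    simp at hc
  have hdeg : p.natDegree ≤ k := by
    refine (natDegree_sub_le _ _).trans ?_
    simp
    omega
  have hsub : (Finset.univ.filter (fun c : K => c ^ k = c)) ⊆ p.roots.toFinset := by
    intro c hc
    simp only [Finset.mem_filter] at hc
    rw [Multiset.mem_toFinset, mem_roots hpne]
    simp [hp', IsRoot, hc.2]
  calc (Finset.univ.filter (fun c : K => c ^ k = c)).card
      ≤ p.roots.toFinset.card := Finset.card_le_card hsub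
    _ ≤ Multiset.card p.roots := Multiset.toFinset_card_le _
    _ ≤ p.natDegree := p.card_roots'
    _ ≤ k := hdeg

/-- Roots of unity are bounded in number. -/
lemma aux_card_rootsOfUnity_le (K : Type) [Field K] [Fintype K] [DecidableEq K] (k : ℕ)
    (hk : 0 < k) :
    (Finset.univ.filter (fun y : K => y ^ k = 1)).card ≤ k := by
  classical
  set p : K[X] := X ^ k - 1 with hp'
  have hpne : p ≠ 0 := by
    intro h
    have hk0 : k ≠ 0 := by omega
    have hc : p.coeff k = 1 := by
      rw [hp']
      simp [coeff_one, hk0, Ne.symm hk0]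
    rw [h] at hc
    simp at hc
  have hdeg : p.natDegree ≤ k := by
    refine (natDegree_sub_le _ _).trans ?_
    simp
  have hsub : (Finset.univ.filter (fun y : K => y ^ k = 1)) ⊆ p.roots.toFinset := by
    intro c hc
    simp only [Finset.mem_filter] at hc
    rw [Multiset.mem_toFinset, mem_roots hpne]
    simp [hp', IsRoot, hc.2]
  calc (Finset.univ.filter (fun y : K => y ^ k = 1)).card
      ≤ p.roots.toFinset.card := Finset.card_le_card hsub
    _ ≤ Multiset.card p.roots := Multiset.toFinset_card_le _
    _ ≤ p.natDegree := p.card_roots'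
    _ ≤ k := hdeg

/-- If `m > 1` and `r + 1` divides `s - 1`, there exists `c ∈ F_{r^2}` such that
`G(c,y)` has no root `y ∈ μ_{r+1}`. -/
theorem stmt10 (m n : ℕ) (hm : 1 < m) (hn : 1 ≤ n)
    (hdvd : (2 ^ m + 1) ∣ (2 ^ n - 1))
    (K : Type) [Field K] [Fintype K] (hcard : Fintype.card K = 2 ^ (2 * m)) :
    ∃ c : K, ∀ y : K, y ^ (2 ^ m + 1) = 1 →
      y ^ (2 ^ n + 1) + c * y ^ (2 ^ n) + c ^ (2 ^ m) * y + 1 ≠ 0 := by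
  classical
  -- characteristic 2
  haveI : CharP K (ringChar K) := ringChar.charP K
  obtain ⟨k, hp, hcard'⟩ := FiniteField.card K (ringChar K)
  have hchar2 : ringChar K = 2 := by
    have hdvd2 : ringChar K ∣ 2 ^ (2 * m) := by
      rw [← hcard, hcard']
      exact dvd_pow_self _ k.ne_zero
    exact (Nat.prime_dvd_prime_iff_eq hp Nat.prime_two).mp
      (hp.dvd_of_dvd_pow hdvd2)
  haveI : CharP K 2 := ringChar.of_eq hchar2
  haveI : Fact (Nat.Prime 2) := ⟨Nat.prime_two⟩
  have hr4 : (4 : ℕ) ≤ 2 ^ m := by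
    calc (4:ℕ) = 2 ^ 2 := rfl
    _ ≤ 2 ^ m := Nat.pow_le_pow_right (by norm_num) hm
  set φ : K → K := fun c => c + c ^ (2 ^ m) with hφ
  set S : Finset K := Finset.univ.filter (fun y => y ^ (2 ^ m + 1) = 1) with hS
  set f : K → K := fun y => y + y⁻¹ with hf
  set T : Finset K := S.image f with hT
  set R : Finset K := Finset.univ.image φ with hR
  -- lower bound for #R via fibers being cosets of the "kernel"
  have hRcard : 2 ^ m ≤ R.card := by
    have hfib : ∀ b ∈ R, (Finset.univ.filter (fun a : K => φ a = b)).card ≤ 2 ^ m := by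
      intro b hb
      rcases Finset.mem_image.mp hb with ⟨a₀, _, ha₀⟩
      refine (Finset.card_le_card_of_injOn (fun a => a + a₀)
        (fun a ha => ?_) (fun a _ a' _ h => by
          have := congrArg (fun z => z + a₀) h
          simpa using this)).trans
        (aux_card_pow_eq_le K (2 ^ m) (by omega))
      simp only [Finset.mem_coe, Finset.mem_filter, Finset.mem_univ, true_and] at ha ⊢
      have hadd : (a + a₀) ^ (2 ^ m) = a ^ (2 ^ m) + a₀ ^ (2 ^ m) :=
        add_pow_char_pow ..
      have ha' : a + a ^ (2 ^ m) = b := ha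
      have ha₀' : a₀ + a₀ ^ (2 ^ m) = b := ha₀
      have h0 : (a + a₀) + (a + a₀) ^ (2 ^ m) = 0 := by
        rw [hadd]
        have hbb : b + b = 0 := CharTwo.add_self_eq_zero b
        linear_combination ha' + ha₀' + hbb
      have h0' : (a + a₀) ^ (2 ^ m) = -(a + a₀) := by linear_combination h0
      rw [h0', CharTwo.neg_eq]
    have := Finset.card_le_mul_card_image_of_maps_to
      (f := φ) (s := (Finset.univ : Finset K)) (t := R)
      (fun a _ => Finset.mem_image_of_mem φ (Finset.mem_univ a)) (2 ^ m)
      (fun b hb => hfib b hb)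
    rw [Finset.card_univ, hcard, two_mul, pow_add] at this
    exact Nat.le_of_mul_le_mul_left this (by positivity)
  -- upper bound for #T via the pairing y ↔ y⁻¹
  have hTcard : 2 * T.card ≤ 2 ^ m + 3 := by
    -- S has at most 2 ^ m + 1 elements
    have hScard : S.card ≤ 2 ^ m + 1 :=
      aux_card_rootsOfUnity_le K (2 ^ m + 1) (by omega)
    -- fibers over nonzero values of T have at least 2 elements
    set S' : Finset K := S.filter (fun y => f y ≠ 0) with hS'
    set T' : Finset K := T.erase 0 with hT'
    have hmaps : ∀ a ∈ S', f a ∈ T' := by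
      intro a ha
      rw [hS', Finset.mem_filter] at ha
      rw [hT', Finset.mem_erase]
      exact ⟨ha.2, Finset.mem_image_of_mem f ha.1⟩
    have hfib2 : ∀ b ∈ T', 2 ≤ (S'.filter (fun a => f a = b)).card := by
      intro b hb
      rw [hT', Finset.mem_erase] at hb
      obtain ⟨hb0, hbT⟩ := hb
      rcases Finset.mem_image.mp hbT with ⟨y, hyS, hyb⟩
      have hy0 : y ≠ 0 := by
        intro h
        rw [hS, Finset.mem_filter] at hyS
        rw [h] at hyS
        simp [zero_pow] at hyS
      have hyS2 : y ^ (2 ^ m + 1) = 1 := by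
        rw [hS, Finset.mem_filter] at hyS
        exact hyS.2
      have hyinvS : y⁻¹ ∈ S := by
        rw [hS, Finset.mem_filter]
        refine ⟨Finset.mem_univ _, ?_⟩
        rw [inv_pow, hyS2, inv_one]
      have hfyinv : f y⁻¹ = b := by
        rw [hf] at hyb ⊢
        simp only [inv_inv]
        rw [← hyb]; ring
      have hyne : y ≠ y⁻¹ := by
        intro h
        have h2 : y * y = 1 := by
          nth_rewrite 2 [h]
          exact (mul_inv_cancel₀ hy0)
        have h3 : (y + 1) ^ 2 = 0 := by
          have := CharTwo.add_sq y 1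
          rw [this, one_pow, sq, h2, CharTwo.add_self_eq_zero]
        have h4 : y = 1 := by
          have h5 := pow_eq_zero_iff (n := 2) (by norm_num) |>.mp h3
          have h6 : y = -1 := eq_neg_of_add_eq_zero_left h5
          rw [h6, CharTwo.neg_eq]
        apply hb0
        rw [← hyb, hf, h4]
        simp [CharTwo.add_self_eq_zero]
      have hyS' : y ∈ S'.filter (fun a => f a = b) := by
        rw [Finset.mem_filter, hS', Finset.mem_filter]
        exact ⟨⟨hyS, by rw [hyb]; exact hb0⟩, hyb⟩
      have hyinvS' : y⁻¹ ∈ S'.filter (fun a => f a = b) := by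
        rw [Finset.mem_filter, hS', Finset.mem_filter]
        exact ⟨⟨hyinvS, by rw [hfyinv]; exact hb0⟩, hfyinv⟩
      exact Finset.one_lt_card.mpr ⟨y, hyS', y⁻¹, hyinvS', hyne⟩
    have h2T' : 2 * T'.card ≤ S'.card :=
      Finset.mul_card_image_le_card_of_maps_to hmaps 2 hfib2
    have hTsub : T ⊆ insert 0 T' := by
      intro t ht
      rcases eq_or_ne t 0 with h | h
      · rw [h]; exact Finset.mem_insert_self _ _
      · exact Finset.mem_insert_of_mem (Finset.mem_erase.mpr ⟨h, ht⟩)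
    have hTle : T.card ≤ T'.card + 1 :=
      (Finset.card_le_card hTsub).trans (Finset.card_insert_le _ _)
    have hS'le : S'.card ≤ S.card := Finset.card_le_card (Finset.filter_subset _ _)
    omega
  -- pick t in R but not in T
  have hlt : T.card < R.card := by omega
  have hex : ∃ t ∈ R, t ∉ T := by
    by_contra h
    push_neg at h
    exact absurd (Finset.card_le_card h) (not_le.mpr hlt)
  obtain ⟨t, htR, htT⟩ := hex
  rcases Finset.mem_image.mp htR with ⟨c, _, hc⟩
  refine ⟨c, fun y hy hzero => ?_⟩
  -- y ≠ 0
  have hy0 : y ≠ 0 := by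
    intro h
    rw [h] at hy
    simp [zero_pow] at hy
  -- y ^ (2 ^ n) = y
  obtain ⟨q, hq⟩ := hdvd
  have h1 : 1 ≤ 2 ^ n := Nat.one_le_two_pow
  have h2n : 2 ^ n = (2 ^ m + 1) * q + 1 := by
    rw [← hq, Nat.sub_add_cancel h1]
  have hys : y ^ (2 ^ n) = y := by
    rw [h2n, pow_add, pow_mul, hy, one_pow, pow_one, one_mul]
  have hys1 : y ^ (2 ^ n + 1) = y * y := by
    rw [pow_add, hys, pow_one]
  rw [hys1, hys] at hzero
  -- so y² + t·y + 1 = 0 with t = c + c ^ 2^m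
  have ht : t = c + c ^ (2 ^ m) := by rw [← hc]
  have hfy : f y = t := by
    have hmul : f y * y = t * y := by
      rw [hf]
      field_simp
      rw [ht]
      linear_combination hzero - CharTwo.add_self_eq_zero ((c + c ^ (2^m)) * y)
    exact mul_right_cancel₀ hy0 hmul
  apply htT
  rw [← hfy, hT]
  exact Finset.mem_image_of_mem f (by rw [hS, Finset.mem_filter]; exact ⟨Finset.mem_univ _, hy⟩)
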